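/- arXiv:math/0402320 — 2 statements merged into one kernel-verified Lean document; each statement's English description precedes it below -/
import Mathlib

section
/- Let λ ⊆ μ be k-bounded partitions such that λ^{ω_k} ⊆ μ^{ω_k} and 𝔠(μ)/𝔠(λ) is a horizontal strip. Then μ^{ω_k}/λ^{ω_k} is a vertical strip, i.e., μ^{ω_k}_r − λ^{ω_k}_r ∈ {0,1} for all r. -/
open scoped Classical

/-- A partition given as a weakly decreasing, finitely supported
function `ℕ → ℕ` (row `i`, counted from the bottom, has `p i` cells). -/
def IsPartitionFun (p : ℕ → ℕ) : Prop :=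
  (∀ i, p (i + 1) ≤ p i) ∧ ∃ N, ∀ i, N ≤ i → p i = 0

/-- Hook length of the square `(i, j)` (0-indexed) in the partition `p`. -/
noncomputable def hookLen (p : ℕ → ℕ) (i j : ℕ) : ℕ :=
  (p i - j) + Set.ncard {i' : ℕ | i < i' ∧ j < p i'}

/-- A partition is an `m`-core if no cell has hook length `m`. -/
def IsCore (m : ℕ) (p : ℕ → ℕ) : Prop :=
  ∀ i j, j < p i → hookLen p i j ≠ m

/-- Number of cells of row `i` of `p` whose hook length is at most `k`. -/
noncomputable def rowKB (k : ℕ) (p : ℕ → ℕ) (i : ℕ) : ℕ :=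
  Set.ncard {j : ℕ | j < p i ∧ hookLen p i j ≤ k}

/-- Number of cells of column `j` of `p` whose hook length is at most `k`. -/
noncomputable def colKB (k : ℕ) (p : ℕ → ℕ) (j : ℕ) : ℕ :=
  Set.ncard {i : ℕ | j < p i ∧ hookLen p i j ≤ k}

/-- The `(k+1)`-residue of the square `(i, j)`, namely `j - i mod (k+1)`. -/
def res (k i j : ℕ) : ZMod (k + 1) := (j : ZMod (k + 1)) - (i : ZMod (k + 1))

/-- The conjugate partition. -/
noncomputable def conjFun (p : ℕ → ℕ) (j : ℕ) : ℕ := Set.ncard {i : ℕ | j < p i}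


/-- If `lam ⊆ μ` are `k`-bounded partitions with `lam^{ω_k} ⊆ μ^{ω_k}` and
`𝔠(μ)/𝔠(lam)` a horizontal strip, then `μ^{ω_k}/lam^{ω_k}` is a vertical strip, i.e.
the parts of the `k`-conjugates differ by at most one in every row. -/
theorem stmt17 (k : ℕ) (lam μ γ δ : ℕ → ℕ)
    (hlam : IsPartitionFun lam) (hlamb : ∀ i, lam i ≤ k)
    (hμ : IsPartitionFun μ) (hμb : ∀ i, μ i ≤ k)
    (hγ : IsPartitionFun γ) (hγcore : IsCore (k + 1) γ) (hγc : ∀ i, lam i = rowKB k γ i)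
    (hδ : IsPartitionFun δ) (hδcore : IsCore (k + 1) δ) (hδc : ∀ i, μ i = rowKB k δ i)
    (hsublam : ∀ i, lam i ≤ μ i)
    (hsub : ∀ i, γ i ≤ δ i)
    (homega : ∀ j, colKB k γ j ≤ colKB k δ j)
    (hhoriz : ∀ c i i', γ i ≤ c → c < δ i → γ i' ≤ c → c < δ i' → i = i') :
    ∀ j, colKB k δ j ≤ colKB k γ j + 1 := by
  intro j
  obtain ⟨N, hN⟩ := hδ.2
  -- Finiteness of the column of δ
  have hfinCδ : {i : ℕ | j < δ i}.Finite := by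
    apply Set.Finite.subset (Set.finite_Iio N)
    intro i hi
    simp only [Set.mem_setOf_eq] at hi
    by_contra h
    simp only [Set.mem_Iio, not_lt] at h
    rw [hN i h] at hi
    exact Nat.not_lt_zero j hi
  have hCsub : {i : ℕ | j < γ i} ⊆ {i : ℕ | j < δ i} := fun i hi =>
    lt_of_lt_of_le hi (hsub i)
  have hfinCγ : {i : ℕ | j < γ i}.Finite := hfinCδ.subset hCsub
  -- hooks only grow from γ to δ
  have hookmono : ∀ i, hookLen γ i j ≤ hookLen δ i j := by
    intro i
    unfold hookLen
    apply Nat.add_le_add (Nat.sub_le_sub_right (hsub i) j)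
    apply Set.ncard_le_ncard
    · intro i' hi'
      exact ⟨hi'.1, lt_of_lt_of_le hi'.2 (hsub i')⟩
    · exact hfinCδ.subset (fun i' hi' => hi'.2)
  set Aδ := {i : ℕ | j < δ i ∧ hookLen δ i j ≤ k} with hAδ
  set Aγ := {i : ℕ | j < γ i ∧ hookLen γ i j ≤ k} with hAγ
  set Bγ := {i : ℕ | j < γ i ∧ k < hookLen γ i j} with hBγ
  have hAδsub : Aδ ⊆ {i : ℕ | j < δ i} := fun i hi => hi.1
  have hBγsub : Bγ ⊆ {i : ℕ | j < δ i} := fun i hi => hCsub hi.1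
  have hdisj : Disjoint Aδ Bγ := by
    rw [Set.disjoint_left]
    intro i hi hi'
    exact absurd (le_trans (hookmono i) hi.2) (not_le.mpr hi'.2)
  -- |Aδ| + |Bγ| ≤ |Cδ|
  have h1 : Aδ.ncard + Bγ.ncard ≤ {i : ℕ | j < δ i}.ncard := by
    rw [← Set.ncard_union_eq hdisj (hfinCδ.subset hAδsub) (hfinCδ.subset hBγsub)]
    exact Set.ncard_le_ncard (Set.union_subset hAδsub hBγsub) hfinCδ
  -- horizontal strip: column of δ has at most one more cell than column of γ
  have h2 : {i : ℕ | j < δ i}.ncard ≤ {i : ℕ | j < γ i}.ncard + 1 := by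
    have hsubU : {i : ℕ | j < δ i} ⊆ {i : ℕ | j < γ i} ∪ ({i : ℕ | j < δ i} \ {i : ℕ | j < γ i}) := by
      intro i hi
      by_cases h : j < γ i
      · exact Or.inl h
      · exact Or.inr ⟨hi, h⟩
    calc {i : ℕ | j < δ i}.ncard
        ≤ ({i : ℕ | j < γ i} ∪ ({i : ℕ | j < δ i} \ {i : ℕ | j < γ i})).ncard :=
          Set.ncard_le_ncard hsubU ((hfinCγ.union (hfinCδ.diff)))
      _ ≤ {i : ℕ | j < γ i}.ncard + ({i : ℕ | j < δ i} \ {i : ℕ | j < γ i}).ncard :=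
          Set.ncard_union_le _ _
      _ ≤ {i : ℕ | j < γ i}.ncard + 1 := by
          apply Nat.add_le_add_left
          rw [Set.ncard_le_one_iff (hfinCδ.diff)]
          intro a b ha hb
          simp only [Set.mem_diff, Set.mem_setOf_eq, not_lt] at ha hb
          exact hhoriz j a b ha.2 ha.1 hb.2 hb.1
  -- |Cγ| = |Aγ| + |Bγ|
  have h3 : {i : ℕ | j < γ i}.ncard = Aγ.ncard + Bγ.ncard := by
    have hdisj2 : Disjoint Aγ Bγ := by
      rw [Set.disjoint_left]
      intro i hi hi'
      exact absurd hi.2 (not_le.mpr hi'.2)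
    have hU : {i : ℕ | j < γ i} = Aγ ∪ Bγ := by
      ext i
      simp only [hAγ, hBγ, Set.mem_union, Set.mem_setOf_eq]
      constructor
      · intro hi
        rcases le_or_gt (hookLen γ i j) k with h | h
        · exact Or.inl ⟨hi, h⟩
        · exact Or.inr ⟨hi, h⟩
      · rintro (⟨hi, _⟩ | ⟨hi, _⟩) <;> exact hi
    rw [hU]
    exact Set.ncard_union_eq hdisj2 (hfinCγ.subset (fun i hi => hi.1))
      (hfinCγ.subset (fun i hi => hi.1))
  show Aδ.ncard ≤ Aγ.ncard + 1
  omega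
end

section
/- Let μ be a k-bounded partition of n, and let r be the highest row of the (k+1)-core 𝔠(μ) containing a removable corner; let i be the (k+1)-residue of that corner. Then no removable corner of 𝔠(μ) of residue i lies in a higher row, and s_i(𝔠(μ)) = 𝔠(μ − e_r), where μ − e_r is μ with one box removed from row r. Consequently λ = μ − e_r satisfies λ ⊆ μ and λ^{ω_k} ⊆ μ^{ω_k}. -/
open scoped Classical

/-- The shape obtained from `γ` by deleting all removable corners of residue `r`. -/
noncomputable def removeAll (k : ℕ) (r : ZMod (k + 1)) (γ : ℕ → ℕ) : ℕ → ℕ :=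
  fun i => γ i - (if 0 < γ i ∧ γ (i + 1) < γ i ∧ res k i (γ i - 1) = r then 1 else 0)


/- ## General beta-number infrastructure -/

noncomputable def bd (p : ℕ → ℕ) (t : ℕ) : ℤ := (p t : ℤ) - t

noncomputable def BSet (p : ℕ → ℕ) : Set ℤ := Set.range (bd p)

noncomputable def xg (p : ℕ → ℕ) (j : ℕ) : ℤ := (j : ℤ) + 1 - conjFun p j

section General

variable {p : ℕ → ℕ} (hp : IsPartitionFun p)

lemma p_anti (hp : IsPartitionFun p) : ∀ {s t : ℕ}, s ≤ t → p t ≤ p s := by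
  intro s t h
  induction t with
  | zero => simp_all
  | succ n ih =>
    rcases Nat.lt_or_ge s (n+1) with h'|h'
    · exact le_trans (hp.1 n) (ih (by omega))
    · have : s = n + 1 := by omega
      simp [this]

lemma bd_strictAnti (hp : IsPartitionFun p) : StrictAnti (bd p) := by
  apply strictAnti_nat_of_succ_lt
  intro n
  have := hp.1 n
  simp only [bd]
  push_cast
  omega

lemma bd_step (hp : IsPartitionFun p) {s t : ℕ} (h : s ≤ t) :
    bd p t ≤ bd p s - (t - s : ℤ) := by
  induction t with
  | zero => interval_cases s; simp
  | succ n ih =>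
    rcases Nat.lt_or_ge s (n+1) with h'|h'
    · have h1 := ih (by omega)
      have h2 : bd p (n+1) < bd p n := bd_strictAnti hp (by omega)
      push_cast
      push_cast at h1
      omega
    · have : s = n + 1 := by omega
      simp [this]

lemma lowerSet_eq_Iio {S : Set ℕ} (hfin : S.Finite)
    (hlow : ∀ a b : ℕ, a ≤ b → b ∈ S → a ∈ S) : S = Set.Iio S.ncard := by
  have hne : Sᶜ.Nonempty := by
    rcases Set.Infinite.nonempty (Set.Finite.infinite_compl hfin) with ⟨x, hx⟩
    exact ⟨x, hx⟩
  set n := sInf Sᶜ with hn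
  have hnotmem : n ∉ S := Nat.sInf_mem hne
  have hS : S = Set.Iio n := by
    ext m
    constructor
    · intro hm
      by_contra h
      simp only [Set.mem_Iio, not_lt] at h
      exact hnotmem (hlow n m h hm)
    · intro hm
      simp only [Set.mem_Iio] at hm
      by_contra h
      have : n ≤ m := Nat.sInf_le h
      omega
  have hnn : S.ncard = n := by
    rw [hS, ← Finset.coe_Iio, Set.ncard_coe_finset, Nat.card_Iio]
  rw [hnn]
  exact hS

end General

section General2

variable {p : ℕ → ℕ}

lemma ncard_Iio (n : ℕ) : (Set.Iio n).ncard = n := by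
  rw [← Finset.coe_Iio, Set.ncard_coe_finset, Nat.card_Iio]

lemma conj_finite (hp : IsPartitionFun p) (j : ℕ) : {t : ℕ | j < p t}.Finite := by
  rcases hp.2 with ⟨N, hN⟩
  apply Set.Finite.subset (Set.finite_Iio N)
  intro t ht
  simp only [Set.mem_setOf_eq] at ht
  simp only [Set.mem_Iio]
  by_contra h
  have := hN t (by omega)
  omega

lemma row_iio (hp : IsPartitionFun p) (j : ℕ) :
    {t : ℕ | j < p t} = Set.Iio (conjFun p j) := by
  have := lowerSet_eq_Iio (conj_finite hp j)
    (fun a b hab hb => by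
      simp only [Set.mem_setOf_eq] at *
      exact lt_of_lt_of_le hb (p_anti hp hab))
  exact this

lemma lt_conj_iff (hp : IsPartitionFun p) {a j : ℕ} :
    a < conjFun p j ↔ j < p a := by
  constructor
  · intro h
    have : a ∈ Set.Iio (conjFun p j) := h
    rw [← row_iio hp] at this
    exact this
  · intro h
    have : a ∈ {t : ℕ | j < p t} := h
    rw [row_iio hp] at this
    exact this

lemma leg_finite (hp : IsPartitionFun p) (a j : ℕ) :
    {t : ℕ | a < t ∧ j < p t}.Finite :=
  Set.Finite.subset (conj_finite hp j) (fun t ht => ht.2)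

lemma conj_split (hp : IsPartitionFun p) {a j : ℕ} (h : j < p a) :
    conjFun p j = (a + 1) + Set.ncard {t : ℕ | a < t ∧ j < p t} := by
  have hset : {t : ℕ | j < p t} = Set.Iio (a + 1) ∪ {t : ℕ | a < t ∧ j < p t} := by
    ext t
    simp only [Set.mem_setOf_eq, Set.mem_union, Set.mem_Iio]
    constructor
    · intro ht
      rcases Nat.lt_or_ge t (a + 1) with h'|h'
      · exact Or.inl h'
      · exact Or.inr ⟨by omega, ht⟩
    · rintro (h'|⟨h1, h2⟩)
      · exact lt_of_lt_of_le h (p_anti hp (by omega))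
      · exact h2
  have hdisj : Disjoint (Set.Iio (a + 1)) {t : ℕ | a < t ∧ j < p t} := by
    rw [Set.disjoint_left]
    intro t ht ht'
    simp only [Set.mem_Iio] at ht
    simp only [Set.mem_setOf_eq] at ht'
    omega
  rw [conjFun, hset, Set.ncard_union_eq hdisj (Set.finite_Iio _) (leg_finite hp a j),
    ncard_Iio]

lemma cell_hook (hp : IsPartitionFun p) {a j : ℕ} (h : j < p a) :
    (hookLen p a j : ℤ) = bd p a - xg p j := by
  have hc := conj_split hp h
  rw [hookLen, xg, bd]
  have : ((p a - j : ℕ) : ℤ) = (p a : ℤ) - j := by omega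
  push_cast [this]
  rw [hc]
  push_cast
  ring

lemma xg_notMem (hp : IsPartitionFun p) (j : ℕ) : xg p j ∉ BSet p := by
  rintro ⟨t, ht⟩
  rcases Nat.lt_or_ge t (conjFun p j) with h|h
  · have hpt : j < p t := (lt_conj_iff hp).1 h
    have : bd p t = (p t : ℤ) - t := rfl
    have h2 : (t : ℤ) ≤ (conjFun p j : ℤ) - 1 := by omega
    rw [xg] at ht
    omega
  · have hpt : ¬ j < p t := fun hc => by
      have := (lt_conj_iff hp).2 hc
      omega
    push_neg at hpt
    have : bd p t = (p t : ℤ) - t := rfl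
    have h2 : (conjFun p j : ℤ) ≤ (t : ℤ) := by exact_mod_cast h
    rw [xg] at ht
    omega

lemma bd_gt_xg_iff (hp : IsPartitionFun p) {a j : ℕ} :
    xg p j < bd p a ↔ j < p a := by
  constructor
  · intro h
    by_contra hc
    push_neg at hc
    have h1 : ¬ a < conjFun p j := fun h' => by
      have := (lt_conj_iff hp).1 h'
      omega
    push_neg at h1
    have : bd p a = (p a : ℤ) - a := rfl
    have h2 : (conjFun p j : ℤ) ≤ (a : ℤ) := by exact_mod_cast h1
    rw [xg] at h
    omega
  · intro h
    have h1 : a < conjFun p j := (lt_conj_iff hp).2 h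
    have : bd p a = (p a : ℤ) - a := rfl
    have h2 : (a : ℤ) ≤ (conjFun p j : ℤ) - 1 := by
      have := (Nat.cast_lt (α := ℤ)).2 h1
      omega
    rw [xg]
    omega

lemma gap_surj (hp : IsPartitionFun p) {x : ℤ} (hx : x ∉ BSet p) :
    ∃ j : ℕ, xg p j = x := by
  classical
  set T : Set ℕ := {t : ℕ | x < bd p t} with hT
  have hfin : T.Finite := by
    apply Set.Finite.subset (Set.finite_Iio (((bd p 0 - x).toNat) + 1))
    intro t ht
    simp only [hT, Set.mem_setOf_eq] at ht
    have := bd_step hp (Nat.zero_le t)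
    simp only [Set.mem_Iio]
    omega
  have hlow : ∀ a b : ℕ, a ≤ b → b ∈ T → a ∈ T := by
    intro a b hab hb
    simp only [hT, Set.mem_setOf_eq] at *
    have := bd_step hp hab
    omega
  have hiio := lowerSet_eq_Iio hfin hlow
  set C := T.ncard with hC
  have hmemT : ∀ t : ℕ, x < bd p t ↔ t < C := by
    intro t
    constructor
    · intro h
      have : t ∈ T := h
      rw [hiio] at this
      exact this
    · intro h
      have : t ∈ Set.Iio C := h
      rw [← hiio] at this
      exact this
  have hbC : bd p C ≤ x - 1 := by
    have h1 : ¬ x < bd p C := fun h => by have := (hmemT C).1 h; omega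
    have h2 : bd p C ≠ x := fun h => hx ⟨C, h⟩
    omega
  have hj0 : (0 : ℤ) ≤ x - 1 + C := by
    have : bd p C = (p C : ℤ) - C := rfl
    omega
  set j : ℕ := (x - 1 + C).toNat with hjdef
  have hjz : (j : ℤ) = x - 1 + C := Int.toNat_of_nonneg hj0
  have hrow : {t : ℕ | j < p t} = Set.Iio C := by
    ext t
    simp only [Set.mem_setOf_eq, Set.mem_Iio]
    constructor
    · intro ht
      by_contra h
      push_neg at h
      have h1 := bd_step hp h
      have h2 : bd p t = (p t : ℤ) - t := rfl
      have h3 : (j : ℤ) < (p t : ℤ) := by exact_mod_cast ht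
      have h4 : (C : ℤ) ≤ t := by exact_mod_cast h
      omega
    · intro ht
      have h0 : t + 1 ≤ C := ht
      have h1 := bd_step hp (show t ≤ C - 1 by omega)
      have h2 : x < bd p (C - 1) := (hmemT (C - 1)).2 (by omega)
      have h3 : bd p t = (p t : ℤ) - t := rfl
      have h5 : ((C - 1 : ℕ) : ℤ) = (C : ℤ) - 1 := by omega
      rw [h5] at h1
      have : (j : ℤ) < (p t : ℤ) := by omega
      exact_mod_cast this
  have hconj : conjFun p j = C := by
    rw [conjFun, hrow, ncard_Iio]
  refine ⟨j, ?_⟩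
  rw [xg, hconj]
  omega

lemma hook_iff (hp : IsPartitionFun p) {a : ℕ} {h : ℤ} (h1 : 1 ≤ h) :
    (∃ j, j < p a ∧ (hookLen p a j : ℤ) = h) ↔ bd p a - h ∉ BSet p := by
  constructor
  · rintro ⟨j, hj, he⟩
    have := cell_hook hp hj
    have hxg : bd p a - h = xg p j := by omega
    rw [hxg]
    exact xg_notMem hp j
  · intro hmem
    rcases gap_surj hp hmem with ⟨j, hj⟩
    have hlt : xg p j < bd p a := by omega
    have hpa : j < p a := (bd_gt_xg_iff hp).1 hlt
    refine ⟨j, hpa, ?_⟩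
    rw [cell_hook hp hpa]
    omega

end General2

section Counting

variable {p : ℕ → ℕ}

noncomputable def inB (p : ℕ → ℕ) (x : ℤ) : ℤ := if x ∈ BSet p then 1 else 0

lemma Ico_succ_insert {a b : ℤ} (h : a ≤ b) :
    Finset.Ico a (b + 1) = insert b (Finset.Ico a b) := by
  ext x
  simp only [Finset.mem_Ico, Finset.mem_insert]
  omega

lemma sum_Ico_top {f : ℤ → ℤ} {a b : ℤ} (h : a ≤ b) :
    ∑ x ∈ Finset.Ico a (b + 1), f x = ∑ x ∈ Finset.Ico a b, f x + f b := by
  rw [Ico_succ_insert h, Finset.sum_insert (by simp)]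
  ring

lemma sum_Ico_bot {f : ℤ → ℤ} {a b : ℤ} (h : a ≤ b) :
    ∑ x ∈ Finset.Ico a (b + 1), f x = f a + ∑ x ∈ Finset.Ico (a + 1) (b + 1), f x := by
  have : Finset.Ico a (b + 1) = insert a (Finset.Ico (a + 1) (b + 1)) := by
    ext x
    simp only [Finset.mem_Ico, Finset.mem_insert]
    omega
  rw [this, Finset.sum_insert (by simp)]

lemma conj_antitone (hp : IsPartitionFun p) (j : ℕ) : conjFun p (j + 1) ≤ conjFun p j := by
  apply Set.ncard_le_ncard _ (conj_finite hp j)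
  intro t ht
  simp only [Set.mem_setOf_eq] at *
  omega

lemma xg_strictMono (hp : IsPartitionFun p) : StrictMono (xg p) := by
  apply strictMono_nat_of_lt_succ
  intro j
  have h1 := conj_antitone hp j
  have h2 : (conjFun p (j+1) : ℤ) ≤ conjFun p j := by exact_mod_cast h1
  simp only [xg]
  push_cast
  omega

lemma bd_mem (p : ℕ → ℕ) (a : ℕ) : bd p a ∈ BSet p := ⟨a, rfl⟩

lemma hook_pos {a j : ℕ} (h : j < p a) : 1 ≤ hookLen p a j := by
  rw [hookLen]; omega

lemma rowKB_eq (hp : IsPartitionFun p) (k a : ℕ) :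
    (rowKB k p a : ℤ) + ∑ x ∈ Finset.Ico (bd p a - k) (bd p a + 1), inB p x
      = (k : ℤ) + 1 := by
  classical
  set W := Finset.Ico (bd p a - k) (bd p a) with hW
  set S : Set ℕ := {j : ℕ | j < p a ∧ hookLen p a j ≤ k} with hS
  have himg : xg p '' S = ↑(W.filter (fun x => x ∉ BSet p)) := by
    ext x
    simp only [Set.mem_image, Finset.coe_filter, Set.mem_setOf_eq, Finset.mem_Ico, hW, hS]
    constructor
    · rintro ⟨j, ⟨hj1, hj2⟩, rfl⟩
      have hc := cell_hook hp hj1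
      have hpos := hook_pos hj1
      have h1 : (1 : ℤ) ≤ (hookLen p a j : ℤ) := by exact_mod_cast hpos
      have h2 : (hookLen p a j : ℤ) ≤ k := by exact_mod_cast hj2
      exact ⟨⟨by omega, by omega⟩, xg_notMem hp j⟩
    · rintro ⟨⟨hx1, hx2⟩, hx3⟩
      rcases gap_surj hp hx3 with ⟨j, rfl⟩
      have hj1 : j < p a := (bd_gt_xg_iff hp).1 hx2
      have hc := cell_hook hp hj1
      refine ⟨j, ⟨hj1, ?_⟩, rfl⟩
      have : (hookLen p a j : ℤ) ≤ k := by omega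
      exact_mod_cast this
  have hcard1 : rowKB k p a = (W.filter (fun x => x ∉ BSet p)).card := by
    rw [rowKB, ← hS, ← Set.ncard_coe_finset, ← himg,
      Set.ncard_image_of_injOn ((xg_strictMono hp).injective.injOn)]
  have hcard2 : (W.filter (fun x => x ∉ BSet p)).card
      + (W.filter (fun x => x ∈ BSet p)).card = k := by
    have h1 := Finset.card_filter_add_card_filter_not
      (s := W) (p := fun x => x ∈ BSet p)
    have h1' : (W.filter (fun x => x ∈ BSet p)).card
        + (W.filter (fun x => x ∉ BSet p)).card = W.card := by
      simpa using h1
    have h2 : W.card = k := by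
      rw [hW, Int.card_Ico]
      omega
    omega
  have hsum : ∑ x ∈ Finset.Ico (bd p a - k) (bd p a + 1), inB p x
      = ((W.filter (fun x => x ∈ BSet p)).card : ℤ) + 1 := by
    rw [sum_Ico_top (by omega)]
    have h1 : ∑ x ∈ W, inB p x = ((W.filter (fun x => x ∈ BSet p)).card : ℤ) := by
      simp only [inB]
      rw [Finset.sum_boole]
    have h2 : inB p (bd p a) = 1 := by simp [inB, bd_mem]
    rw [← hW, h1, h2]
  rw [hcard1, hsum]
  push_cast
  omega

end Counting

lemma colKB_eq (hp : IsPartitionFun p) (k j : ℕ) :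
    (colKB k p j : ℤ) = ∑ x ∈ Finset.Ico (xg p j) (xg p j + (k + 1)), inB p x := by
  classical
  set W := Finset.Ico (xg p j + 1) (xg p j + (k + 1)) with hW
  set S : Set ℕ := {a : ℕ | j < p a ∧ hookLen p a j ≤ k} with hS
  have himg : bd p '' S = ↑(W.filter (fun x => x ∈ BSet p)) := by
    ext y
    simp only [Set.mem_image, Finset.coe_filter, Set.mem_setOf_eq, Finset.mem_Ico, hW, hS]
    constructor
    · rintro ⟨a, ⟨ha1, ha2⟩, rfl⟩
      have hc := cell_hook hp ha1
      have hpos := hook_pos ha1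
      have h1 : (1 : ℤ) ≤ (hookLen p a j : ℤ) := by exact_mod_cast hpos
      have h2 : (hookLen p a j : ℤ) ≤ k := by exact_mod_cast ha2
      exact ⟨⟨by omega, by omega⟩, bd_mem p a⟩
    · rintro ⟨⟨hy1, hy2⟩, a, rfl⟩
      have ha1 : j < p a := (bd_gt_xg_iff hp).1 (by omega)
      have hc := cell_hook hp ha1
      refine ⟨a, ⟨ha1, ?_⟩, rfl⟩
      have : (hookLen p a j : ℤ) ≤ k := by omega
      exact_mod_cast this
  have hcard1 : colKB k p j = (W.filter (fun x => x ∈ BSet p)).card := by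
    rw [colKB, ← hS, ← Set.ncard_coe_finset, ← himg,
      Set.ncard_image_of_injOn ((bd_strictAnti hp).injective.injOn)]
  have hx0 : inB p (xg p j) = 0 := by simp [inB, xg_notMem hp j]
  have hsplit : ∑ x ∈ Finset.Ico (xg p j) (xg p j + (k + 1)), inB p x
      = inB p (xg p j) + ∑ x ∈ W, inB p x := by
    have hb : xg p j + (k + 1) = (xg p j + k) + 1 := by ring
    rw [hb, sum_Ico_bot (by omega), ← hb]
  have hsum : ∑ x ∈ W, inB p x = ((W.filter (fun x => x ∈ BSet p)).card : ℤ) := by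
    simp only [inB]
    rw [Finset.sum_boole]
  rw [hcard1, hsplit, hx0, hsum]
  ring

section Specific

lemma zmod_int_iff {n : ℕ} {a b : ℤ} : ((a : ZMod n) = (b : ZMod n)) ↔ (n : ℤ) ∣ b - a := by
  rw [ZMod.intCast_eq_intCast_iff]
  exact Int.modEq_iff_dvd

variable {k : ℕ} {δ : ℕ → ℕ} {r : ℕ}

/-- The shift predicate: beads `y` that get moved down by one. -/
def ShD (k : ℕ) (δ : ℕ → ℕ) (r : ℕ) (y : ℤ) : Prop :=
  ((y : ZMod (k+1)) = ((bd δ r : ℤ) : ZMod (k+1))) ∧ bd δ r ≤ y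

lemma below_iff (hδ : IsPartitionFun δ) (htop : ∀ t, r < t → δ t = 0)
    {z : ℤ} (hz : z < bd δ r) : z ∈ BSet δ ↔ z ≤ -(r + 1 : ℤ) := by
  constructor
  · rintro ⟨t, rfl⟩
    have ht : r < t := by
      by_contra h
      push_neg at h
      have := bd_step hδ h
      omega
    have h0 := htop t ht
    have : bd δ t = (δ t : ℤ) - t := rfl
    rw [h0] at this
    simp at this
    have : (r : ℤ) + 1 ≤ t := by exact_mod_cast ht
    omega
  · intro h
    have h0 : 0 ≤ -z := by
      have : (0:ℤ) ≤ r := Int.natCast_nonneg r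
      omega
    refine ⟨(-z).toNat, ?_⟩
    have h1 : ((-z).toNat : ℤ) = -z := Int.toNat_of_nonneg h0
    have h2 : r < (-z).toNat := by omega
    have := htop _ h2
    show (δ ((-z).toNat) : ℤ) - _ = z
    rw [this]
    simp
    omega

lemma bset_closure (hδ : IsPartitionFun δ) (hcore : IsCore (k + 1) δ)
    {y : ℤ} (hy : y ∈ BSet δ) : y - (k + 1) ∈ BSet δ := by
  rcases hy with ⟨t, rfl⟩
  by_contra h
  rcases (hook_iff hδ (show (1:ℤ) ≤ (k:ℤ)+1 by omega)).2 h with ⟨j, hj, he⟩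
  have : hookLen δ t j = k + 1 := by exact_mod_cast he
  exact hcore t j hj this

lemma down_closed (hδ : IsPartitionFun δ) (hcore : IsCore (k + 1) δ)
    {y z : ℤ} (hy : y ∈ BSet δ) (hz : z ≤ y)
    (hc : ((z : ZMod (k+1)) = ((y : ZMod (k+1))))) : z ∈ BSet δ := by
  have hd : ((k+1 : ℕ) : ℤ) ∣ y - z := by
    have := zmod_int_iff.1 hc
    exact_mod_cast this
  rcases hd with ⟨m, hm⟩
  have hm0 : 0 ≤ m := by
    by_contra h
    push_neg at h
    push_cast at hm
    nlinarith [hm]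
  lift m to ℕ using hm0
  clear hc
  induction m generalizing y with
  | zero =>
    simp at hm
    have : z = y := by omega
    rwa [this]
  | succ n ih =>
    have h1 : y - (k+1) ∈ BSet δ := bset_closure hδ hcore hy
    have hx : ((k:ℤ)+1)*((n:ℤ)+1) = ((k:ℤ)+1)*(n:ℤ) + ((k:ℤ)+1) := by ring
    have hnn : (0:ℤ) ≤ ((k:ℤ)+1)*(n:ℤ) := by positivity
    push_cast at hm
    apply ih h1
    · omega
    · push_cast
      omega

lemma deltar_le (hδ : IsPartitionFun δ) (hcore : IsCore (k + 1) δ)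
    (htop : ∀ t, r < t → δ t = 0) : (δ r : ℤ) ≤ k := by
  have h1 : bd δ r - (k + 1) ∈ BSet δ := bset_closure hδ hcore (bd_mem δ r)
  have h2 := (below_iff hδ htop (show bd δ r - (k+1) < bd δ r by omega)).1 h1
  have : bd δ r = (δ r : ℤ) - r := rfl
  omega

lemma mc_mem (hδ : IsPartitionFun δ) (hcore : IsCore (k + 1) δ)
    (htop : ∀ t, r < t → δ t = 0) : bd δ r - (k + 2) ∈ BSet δ := by
  have h1 := deltar_le hδ hcore htop
  apply (below_iff hδ htop (by omega)).2
  have : bd δ r = (δ r : ℤ) - r := rfl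
  omega

lemma brm1_notMem (hδ : IsPartitionFun δ) (htop : ∀ t, r < t → δ t = 0)
    (hr : 0 < δ r) : bd δ r - 1 ∉ BSet δ := by
  intro h
  have h2 := (below_iff hδ htop (show bd δ r - 1 < bd δ r by omega)).1 h
  have : bd δ r = (δ r : ℤ) - r := rfl
  have : (1:ℤ) ≤ (δ r : ℤ) := by exact_mod_cast hr
  omega

lemma class_c_iff (hδ : IsPartitionFun δ) (hcore : IsCore (k + 1) δ)
    (htop : ∀ t, r < t → δ t = 0) (hr : 0 < δ r) {z : ℤ}
    (hc : (z : ZMod (k+1)) = ((bd δ r - 1 : ℤ) : ZMod (k+1))) :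
    z ∈ BSet δ ↔ z ≤ bd δ r - (k + 2) := by
  constructor
  · intro hz
    by_contra h
    push_neg at h
    have hd : ((k+1 : ℤ)) ∣ (bd δ r - 1) - z := by
      have := zmod_int_iff.1 hc
      exact_mod_cast this
    have hge : bd δ r - 1 ≤ z := by
      rcases hd with ⟨m, hm⟩
      by_contra h2
      push_neg at h2
      have hm1 : 1 ≤ m := by nlinarith
      nlinarith
    have : bd δ r - 1 ∈ BSet δ := by
      apply down_closed hδ hcore hz (by omega)
      exact hc.symm
    exact brm1_notMem hδ htop hr this
  · intro hz
    apply down_closed hδ hcore (mc_mem hδ hcore htop) hz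
    have hd : ((k:ℤ)+1) ∣ (bd δ r - 1) - z := by exact_mod_cast zmod_int_iff.1 hc
    rw [zmod_int_iff]
    have h2 : (bd δ r - ((k:ℤ)+2)) - z = ((bd δ r - 1) - z) - ((k:ℤ)+1) := by ring
    have h3 : ((k:ℤ)+1) ∣ (bd δ r - ((k:ℤ)+2)) - z := by
      rw [h2]
      exact dvd_sub hd (dvd_refl _)
    exact_mod_cast h3

end Specific

section Specific2

variable {k : ℕ} {δ : ℕ → ℕ} {r : ℕ}

lemma removable_iff (hδ : IsPartitionFun δ) (t : ℕ) :
    (0 < δ t ∧ δ (t+1) < δ t) ↔ bd δ t - 1 ∉ BSet δ := by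
  have hb : ∀ s, bd δ s = (δ s : ℤ) - s := fun s => rfl
  constructor
  · rintro ⟨h1, h2⟩ ⟨s, hs⟩
    have hlt : bd δ s < bd δ t := by omega
    have hst : t < s := by
      by_contra h
      push_neg at h
      have := bd_step hδ h
      omega
    have hs1 : t + 1 ≤ s := hst
    have := bd_step hδ hs1
    have h3 := hb (t+1)
    have h4 := hb t
    have h5 := hb s
    have hcast : ((t:ℤ)+1) ≤ (s:ℤ) := by exact_mod_cast hs1
    omega
  · intro h
    have h0 : 0 < δ t := by
      by_contra hc
      push_neg at hc
      have h1 : δ t = 0 := by omega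
      have h2 : δ (t+1) = 0 := by have := hδ.1 t; omega
      apply h
      refine ⟨t+1, ?_⟩
      rw [hb (t+1), hb t, h1, h2]
      push_cast
      ring
    refine ⟨h0, ?_⟩
    have h1 : bd δ (t+1) < bd δ t := bd_strictAnti hδ (by omega)
    have h2 : bd δ (t+1) ≠ bd δ t - 1 := fun hc => h ⟨t+1, hc⟩
    have h3 := hb (t+1)
    have h4 := hb t
    omega

lemma res_eq (h0 : 0 < δ t) :
    res k t (δ t - 1) = ((bd δ t - 1 : ℤ) : ZMod (k+1)) := by
  rw [res]
  have hb : bd δ t = (δ t : ℤ) - t := rfl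
  have h1 : ((δ t - 1 : ℕ) : ℤ) = (δ t : ℤ) - 1 := by omega
  have : ((δ t - 1 : ℕ) : ZMod (k+1)) = (((δ t : ℤ) - 1 : ℤ) : ZMod (k+1)) := by
    rw [← h1]
    push_cast
    ring
  rw [this, hb]
  push_cast
  ring

lemma sh_iff (hδ : IsPartitionFun δ) (hcore : IsCore (k + 1) δ)
    (htop : ∀ t, r < t → δ t = 0) (hr : 0 < δ r) (t : ℕ) :
    (0 < δ t ∧ δ (t+1) < δ t ∧ res k t (δ t - 1) = res k r (δ r - 1))
      ↔ ShD k δ r (bd δ t) := by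
  have hsub : ∀ x y : ℤ, (((x - 1 : ℤ)) : ZMod (k+1)) = ((y - 1 : ℤ) : ZMod (k+1))
      ↔ ((x : ℤ) : ZMod (k+1)) = ((y : ℤ) : ZMod (k+1)) := by
    intro x y
    constructor
    · intro h
      have := congrArg (· + (1 : ZMod (k+1))) h
      simpa using this
    · intro h
      push_cast at h ⊢
      rw [h]
  constructor
  · rintro ⟨h1, h2, h3⟩
    rw [res_eq h1, res_eq hr] at h3
    have hcl : ((bd δ t : ℤ) : ZMod (k+1)) = ((bd δ r : ℤ) : ZMod (k+1)) :=
      (hsub _ _).1 h3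
    refine ⟨hcl, ?_⟩
    have hnot : bd δ t - 1 ∉ BSet δ := (removable_iff hδ t).1 ⟨h1, h2⟩
    by_contra hlt
    push_neg at hlt
    apply hnot
    apply (class_c_iff hδ hcore htop hr ((hsub _ _).2 hcl)).2
    -- bd δ t - 1 ≤ bd δ r - (k+2) since bd δ t < bd δ r and same class
    have hd : ((k:ℤ)+1) ∣ (bd δ r) - (bd δ t) := by
      exact_mod_cast zmod_int_iff.1 hcl
    rcases hd with ⟨m, hm⟩
    have hm1 : 1 ≤ m := by nlinarith
    nlinarith
  · rintro ⟨hcl, hge⟩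
    have hnot : bd δ t - 1 ∉ BSet δ := by
      intro hmem
      have := (class_c_iff hδ hcore htop hr ((hsub _ _).2 hcl)).1 hmem
      omega
    have hrem := (removable_iff hδ t).2 hnot
    refine ⟨hrem.1, hrem.2, ?_⟩
    rw [res_eq hrem.1, res_eq hr]
    exact (hsub _ _).2 hcl

end Specific2

section Specific3

variable {k : ℕ} {δ : ℕ → ℕ} {r : ℕ}

-- Abbreviation hypotheses bundle
structure Ctx (k : ℕ) (δ : ℕ → ℕ) (r : ℕ) : Prop where
  hδ : IsPartitionFun δ
  hcore : IsCore (k + 1) δ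
  htop : ∀ t, r < t → δ t = 0
  hr : 0 < δ r
  hk : 1 ≤ k

namespace Ctx

noncomputable def δ' (_ : Ctx k δ r) : ℕ → ℕ := removeAll k (res k r (δ r - 1)) δ

lemma delta'_eq (C : Ctx k δ r) (t : ℕ) :
    C.δ' t = δ t - (if ShD k δ r (bd δ t) then 1 else 0) := by
  show removeAll k (res k r (δ r - 1)) δ t = _
  rw [removeAll]
  congr 1
  by_cases h : ShD k δ r (bd δ t)
  · rw [if_pos ((sh_iff C.hδ C.hcore C.htop C.hr t).2 h), if_pos h]
  · rw [if_neg (fun hc => h ((sh_iff C.hδ C.hcore C.htop C.hr t).1 hc)), if_neg h]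

lemma sh_pos (C : Ctx k δ r) {t : ℕ} (h : ShD k δ r (bd δ t)) : 0 < δ t :=
  ((sh_iff C.hδ C.hcore C.htop C.hr t).2 h).1

lemma sh_rem (C : Ctx k δ r) {t : ℕ} (h : ShD k δ r (bd δ t)) : δ (t+1) < δ t :=
  ((sh_iff C.hδ C.hcore C.htop C.hr t).2 h).2.1

lemma hδ' (C : Ctx k δ r) : IsPartitionFun C.δ' := by
  constructor
  · intro t
    rw [C.delta'_eq t, C.delta'_eq (t+1)]
    have hm := C.hδ.1 t
    by_cases h1 : ShD k δ r (bd δ t)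
    · have := C.sh_rem h1
      by_cases h2 : ShD k δ r (bd δ (t+1)) <;> simp [h1, h2] <;> omega
    · by_cases h2 : ShD k δ r (bd δ (t+1)) <;> simp [h1, h2] <;> omega
  · rcases C.hδ.2 with ⟨N, hN⟩
    refine ⟨N, fun t ht => ?_⟩
    rw [C.delta'_eq t, hN t ht]
    simp

lemma bd' (C : Ctx k δ r) (t : ℕ) : bd C.δ' t = bd δ t - (if ShD k δ r (bd δ t) then 1 else 0) := by
  have h1 : bd C.δ' t = (C.δ' t : ℤ) - t := rfl
  have h2 : bd δ t = (δ t : ℤ) - t := rfl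
  rw [h1, C.delta'_eq t]
  by_cases h : ShD k δ r (bd δ t)
  · have := C.sh_pos h
    rw [if_pos h, if_pos h]
    have : ((δ t - 1 : ℕ) : ℤ) = (δ t : ℤ) - 1 := by omega
    rw [this]
    omega
  · rw [if_neg h, if_neg h]
    simp
    omega

lemma mem' (C : Ctx k δ r) (x : ℤ) : x ∈ BSet C.δ' ↔
    ((x + 1 ∈ BSet δ ∧ ShD k δ r (x+1)) ∨ (x ∈ BSet δ ∧ ¬ ShD k δ r x)) := by
  constructor
  · rintro ⟨t, ht⟩
    rw [C.bd' t] at ht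
    by_cases h : ShD k δ r (bd δ t)
    · rw [if_pos h] at ht
      left
      have hx : bd δ t = x + 1 := by omega
      rw [hx] at h
      exact ⟨⟨t, hx⟩, h⟩
    · rw [if_neg h] at ht
      right
      have hx : bd δ t = x := by omega
      rw [hx] at h
      exact ⟨⟨t, hx⟩, h⟩
  · rintro (⟨⟨t, ht⟩, hsh⟩|⟨⟨t, ht⟩, hsh⟩)
    · refine ⟨t, ?_⟩
      rw [C.bd' t, ht, if_pos (ht ▸ hsh)]
      omega
    · refine ⟨t, ?_⟩
      rw [C.bd' t, ht, if_neg (ht ▸ hsh)]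
      omega

end Ctx

end Specific3

namespace Ctx

variable {k : ℕ} {δ : ℕ → ℕ} {r : ℕ}

lemma kdvd (C : Ctx k δ r) {z : ℤ} (h : ((k:ℤ)+1) ∣ z) (h1 : -((k:ℤ)+1) < z)
    (h2 : z < (k:ℤ)+1) : z = 0 := by
  rcases h with ⟨m, hm⟩
  subst hm
  have hm0 : m = 0 := by nlinarith
  simp [hm0]

lemma cast_shift (x : ℤ) : ((x + 1 : ℤ) : ZMod (k+1)) = ((x : ℤ) : ZMod (k+1)) + 1 := by
  push_cast
  ring

lemma cast_sub1 (x : ℤ) : ((x - 1 : ℤ) : ZMod (k+1)) = ((x : ℤ) : ZMod (k+1)) - 1 := by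
  push_cast
  ring

lemma succ_ne_self (C : Ctx k δ r) (x y : ℤ) (h : (x : ZMod (k+1)) = (y : ZMod (k+1))) :
    ((x + 1 : ℤ) : ZMod (k+1)) ≠ (y : ZMod (k+1)) := by
  intro hc
  rw [cast_shift, ← h] at hc
  have : ((x + 1 : ℤ) : ZMod (k+1)) = ((x : ℤ) : ZMod (k+1)) := by
    rw [cast_shift, hc]
  have hd : ((k:ℤ)+1) ∣ x - (x+1) := by exact_mod_cast zmod_int_iff.1 this
  have := C.kdvd hd (by have := C.hk; push_cast; omega) (by have := C.hk; push_cast; omega)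
  omega

lemma E1 (C : Ctx k δ r) (x : ℤ)
    (h1 : (x : ZMod (k+1)) ≠ ((bd δ r - 1 : ℤ) : ZMod (k+1)))
    (h2 : (x : ZMod (k+1)) ≠ ((bd δ r : ℤ) : ZMod (k+1))) :
    x ∈ BSet C.δ' ↔ x ∈ BSet δ := by
  rw [C.mem']
  constructor
  · rintro (⟨hB, hcl, hge⟩|⟨hB, _⟩)
    · exfalso
      apply h1
      rw [cast_shift] at hcl
      rw [cast_sub1]
      rw [← hcl]
      ring
    · exact hB
  · intro hB
    right
    exact ⟨hB, fun hc => h2 hc.1⟩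

lemma E2 (C : Ctx k δ r) (x : ℤ)
    (h1 : (x : ZMod (k+1)) = ((bd δ r - 1 : ℤ) : ZMod (k+1))) :
    x ∈ BSet C.δ' ↔ (x ∈ BSet δ ∨ x + 1 ∈ BSet δ) := by
  have hcl : ((x + 1 : ℤ) : ZMod (k+1)) = ((bd δ r : ℤ) : ZMod (k+1)) := by
    rw [cast_shift, h1, cast_sub1]
    ring
  have hnsh : ¬ ShD k δ r x := by
    rintro ⟨hc, _⟩
    exact C.succ_ne_self x (bd δ r) hc hcl
  rw [C.mem']
  constructor
  · rintro (⟨hB, _⟩|⟨hB, _⟩)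
    · exact Or.inr hB
    · exact Or.inl hB
  · rintro (hB|hB)
    · exact Or.inr ⟨hB, hnsh⟩
    · by_cases hge : bd δ r ≤ x + 1
      · exact Or.inl ⟨hB, hcl, hge⟩
      · push_neg at hge
        right
        refine ⟨?_, hnsh⟩
        have h2 := (below_iff C.hδ C.htop hge).1 hB
        have hb : bd δ r = (δ r : ℤ) - r := rfl
        have hδr : (1:ℤ) ≤ (δ r : ℤ) := by exact_mod_cast C.hr
        apply (below_iff C.hδ C.htop (show x < bd δ r by omega)).2
        omega

lemma E3 (C : Ctx k δ r) (x : ℤ)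
    (h1 : (x : ZMod (k+1)) = ((bd δ r : ℤ) : ZMod (k+1))) :
    x ∈ BSet C.δ' ↔ (x ∈ BSet δ ∧ x < bd δ r) := by
  rw [C.mem']
  constructor
  · rintro (⟨hB, hcl, hge⟩|⟨hB, hnsh⟩)
    · exfalso
      exact C.succ_ne_self x _ h1 hcl
    · refine ⟨hB, ?_⟩
      by_contra h
      push_neg at h
      exact hnsh ⟨h1, h⟩
  · rintro ⟨hB, hlt⟩
    right
    exact ⟨hB, fun hc => absurd hc.2 (by omega)⟩

lemma key_pair (C : Ctx k δ r) {x0 : ℤ}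
    (hcl : (x0 : ZMod (k+1)) = ((bd δ r - 1 : ℤ) : ZMod (k+1)))
    (hB : x0 + 1 ∈ BSet δ) : x0 + 1 < bd δ r ↔ x0 ∈ BSet δ := by
  constructor
  · intro h
    have h2 := (below_iff C.hδ C.htop h).1 hB
    have hb : bd δ r = (δ r : ℤ) - r := rfl
    have hδr : (1:ℤ) ≤ (δ r : ℤ) := by exact_mod_cast C.hr
    apply (below_iff C.hδ C.htop (by omega)).2
    omega
  · intro h
    have := (class_c_iff C.hδ C.hcore C.htop C.hr hcl).1 h
    omega

lemma WIN1 (C : Ctx k δ r) {x0 : ℤ}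
    (hcl : (x0 : ZMod (k+1)) = ((bd δ r - 1 : ℤ) : ZMod (k+1))) :
    inB C.δ' x0 + inB C.δ' (x0+1) = inB δ x0 + inB δ (x0+1) := by
  have hcl1 : ((x0 + 1 : ℤ) : ZMod (k+1)) = ((bd δ r : ℤ) : ZMod (k+1)) := by
    rw [cast_shift, hcl, cast_sub1]
    ring
  have e2 := C.E2 x0 hcl
  have e3 := C.E3 (x0+1) hcl1
  by_cases hb1 : x0 + 1 ∈ BSet δ
  · have hk := C.key_pair hcl hb1
    by_cases hb0 : x0 ∈ BSet δ
    · have : x0 + 1 < bd δ r := hk.2 hb0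
      simp [inB, e2, e3, hb0, hb1, this]
    · have : ¬ (x0 + 1 < bd δ r) := fun h => hb0 (hk.1 h)
      simp [inB, e2, e3, hb0, hb1, this]
  · by_cases hb0 : x0 ∈ BSet δ
    · simp [inB, e2, e3, hb0, hb1]
    · simp [inB, e2, e3, hb0, hb1]

end Ctx

namespace Ctx

variable {k : ℕ} {δ : ℕ → ℕ} {r : ℕ}

lemma near_eq (C : Ctx k δ r) {x y : ℤ} (h : (x : ZMod (k+1)) = (y : ZMod (k+1)))
    (h1 : -(k:ℤ)-1 < y - x) (h2 : y - x < (k:ℤ)+1) : x = y := by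
  have hd : ((k:ℤ)+1) ∣ y - x := by exact_mod_cast zmod_int_iff.1 h
  have := C.kdvd hd (by omega) h2
  omega

lemma class_trans {a b c d : ℤ} (h : (a : ZMod (k+1)) = (b : ZMod (k+1))) (m : ℤ)
    (he : d - c = (b - a) + m * ((k:ℤ)+1)) : (c : ZMod (k+1)) = (d : ZMod (k+1)) := by
  have hd : ((k:ℤ)+1) ∣ b - a := by exact_mod_cast zmod_int_iff.1 h
  have hd2 : ((k:ℤ)+1) ∣ d - c := by
    rw [he]
    exact dvd_add hd ⟨m, by ring⟩
  apply zmod_int_iff.2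
  exact_mod_cast hd2

lemma inB_eq_of_iff {p q : ℕ → ℕ} {x : ℤ} (h : x ∈ BSet p ↔ x ∈ BSet q) :
    inB p x = inB q x := by
  simp only [inB]
  by_cases hx : x ∈ BSet q
  · rw [if_pos (h.2 hx), if_pos hx]
  · rw [if_neg (fun hc => hx (h.1 hc)), if_neg hx]

lemma sum_off (C : Ctx k δ r) (W P : Finset ℤ) (hPW : P ⊆ W)
    (hoff : ∀ x ∈ W, x ∉ P → inB C.δ' x = inB δ x) :
    ∑ x ∈ W, inB C.δ' x
      = ∑ x ∈ W, inB δ x + ∑ x ∈ P, (inB C.δ' x - inB δ x) := by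
  have h1 : ∑ x ∈ P, (inB C.δ' x - inB δ x)
      = ∑ x ∈ W, (inB C.δ' x - inB δ x) :=
    Finset.sum_subset hPW (fun x hx hnx => by rw [hoff x hx hnx]; ring)
  have h2 : ∑ x ∈ W, (inB C.δ' x - inB δ x)
      = ∑ x ∈ W, inB C.δ' x - ∑ x ∈ W, inB δ x := Finset.sum_sub_distrib _ _
  omega

lemma WROW_NE (C : Ctx k δ r) {v : ℤ}
    (hv : (v : ZMod (k+1)) ≠ ((bd δ r - 1 : ℤ) : ZMod (k+1))) :
    ∑ x ∈ Finset.Ico (v - k) (v + 1), inB C.δ' x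
      = ∑ x ∈ Finset.Ico (v - k) (v + 1), inB δ x := by
  -- find the class-c element in the window
  obtain ⟨s, hs1, hsk, hcl⟩ : ∃ s : ℤ, 1 ≤ s ∧ s ≤ k ∧
      ((v - s : ℤ) : ZMod (k+1)) = ((bd δ r - 1 : ℤ) : ZMod (k+1)) := by
    set w := v - (bd δ r - 1) with hw
    refine ⟨w % ((k:ℤ)+1), ?_, ?_, ?_⟩
    · have h0 : 0 ≤ w % ((k:ℤ)+1) := Int.emod_nonneg w (by omega)
      rcases h0.lt_or_eq with h|h
      · omega
      · exfalso
        apply hv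
        have hdvd : ((k:ℤ)+1) ∣ w := Int.dvd_of_emod_eq_zero h.symm
        apply zmod_int_iff.2
        have : (bd δ r - 1) - v = -w := by rw [hw]; ring
        rw [this]
        exact_mod_cast hdvd.neg_right
    · have := Int.emod_lt_of_pos w (show (0:ℤ) < (k:ℤ)+1 by omega)
      omega
    · apply zmod_int_iff.2
      have hd : ((k:ℤ)+1) ∣ w - w % ((k:ℤ)+1) := Int.dvd_self_sub_of_emod_eq rfl
      have he : (bd δ r - 1) - (v - w % ((k:ℤ)+1)) = -(w - w % ((k:ℤ)+1)) := by
        rw [hw]; ring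
      rw [he]
      exact_mod_cast hd.neg_right
  set x0 := v - s with hx0
  have hc1 : ((x0 + 1 : ℤ) : ZMod (k+1)) = ((bd δ r : ℤ) : ZMod (k+1)) :=
    class_trans hcl 0 (by ring)
  have hsum := C.sum_off (Finset.Ico (v - k) (v + 1)) {x0, x0 + 1}
    (by
      intro x hx
      simp only [Finset.mem_insert, Finset.mem_singleton] at hx
      rw [Finset.mem_Ico]
      rcases hx with rfl|rfl <;> omega)
    (by
      intro x hx hnx
      rw [Finset.mem_Ico] at hx
      simp only [Finset.mem_insert, Finset.mem_singleton] at hnx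
      push_neg at hnx
      apply inB_eq_of_iff
      apply C.E1 x
      · intro hc
        have : x = x0 := C.near_eq (hc.trans hcl.symm) (by omega) (by omega)
        omega
      · intro hc
        have : x = x0 + 1 := C.near_eq (hc.trans hc1.symm) (by omega) (by omega)
        omega)
  rw [hsum, Finset.sum_pair (show x0 ≠ x0 + 1 by omega)]
  have := C.WIN1 hcl
  omega

end Ctx

namespace Ctx

variable {k : ℕ} {δ : ℕ → ℕ} {r : ℕ}

lemma WROW_C (C : Ctx k δ r) {v : ℤ}
    (hv : (v : ZMod (k+1)) = ((bd δ r - 1 : ℤ) : ZMod (k+1)))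
    (hvB : v ∈ BSet δ) :
    ∑ x ∈ Finset.Ico (v - k) (v + 1), inB C.δ' x
      = ∑ x ∈ Finset.Ico (v - k) (v + 1), inB δ x := by
  have hk := C.hk
  have hvk : ((v - k : ℤ) : ZMod (k+1)) = ((bd δ r : ℤ) : ZMod (k+1)) :=
    class_trans hv 1 (by ring)
  have hvsmall := (class_c_iff C.hδ C.hcore C.htop C.hr hv).1 hvB
  have hsum := C.sum_off (Finset.Ico (v - k) (v + 1)) {v - k, v}
    (by
      intro x hx
      simp only [Finset.mem_insert, Finset.mem_singleton] at hx
      rw [Finset.mem_Ico]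
      rcases hx with rfl|rfl <;> omega)
    (by
      intro x hx hnx
      rw [Finset.mem_Ico] at hx
      simp only [Finset.mem_insert, Finset.mem_singleton] at hnx
      push_neg at hnx
      apply inB_eq_of_iff
      apply C.E1 x
      · intro hc
        have : x = v := C.near_eq (hc.trans hv.symm) (by omega) (by omega)
        omega
      · intro hc
        have : x = v - k := C.near_eq (hc.trans hvk.symm) (by omega) (by omega)
        omega)
  rw [hsum, Finset.sum_pair (show v - k ≠ v by omega)]
  have h1 : inB C.δ' v = inB δ v := by
    apply inB_eq_of_iff
    rw [C.E2 v hv]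
    constructor
    · intro _; exact hvB
    · intro h; exact Or.inl h
  have h2 : inB C.δ' (v - k) = inB δ (v - k) := by
    apply inB_eq_of_iff
    rw [C.E3 (v - k) hvk]
    constructor
    · rintro ⟨h, _⟩; exact h
    · intro h; exact ⟨h, by omega⟩
  omega

lemma WROW_SH (C : Ctx k δ r) {y : ℤ}
    (hcl : (y : ZMod (k+1)) = ((bd δ r : ℤ) : ZMod (k+1)))
    (hyB : y ∈ BSet δ) (hge : bd δ r ≤ y) :
    ∑ x ∈ Finset.Ico (y - 1 - k) y, inB C.δ' x
      = ∑ x ∈ Finset.Ico (y - k) (y + 1), inB δ x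
        + (if y = bd δ r then 1 else 0) := by
  have hk := C.hk
  have hym1 : ((y - 1 : ℤ) : ZMod (k+1)) = ((bd δ r - 1 : ℤ) : ZMod (k+1)) :=
    class_trans hcl 0 (by ring)
  have hyk1 : ((y - k - 1 : ℤ) : ZMod (k+1)) = ((bd δ r : ℤ) : ZMod (k+1)) :=
    class_trans hcl 1 (by ring)
  -- split LHS at left end
  have hLHS : ∑ x ∈ Finset.Ico (y - 1 - k) y, inB C.δ' x
      = inB C.δ' (y - 1 - k) + ∑ x ∈ Finset.Ico (y - k) y, inB C.δ' x := by
    have h := sum_Ico_bot (f := inB C.δ') (a := y - 1 - k) (b := y - 1) (by omega)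
    have e1 : y - 1 + 1 = y := by ring
    have e2 : y - 1 - k + 1 = y - k := by ring
    rw [e1, e2] at h
    exact h
  have hRHS : ∑ x ∈ Finset.Ico (y - k) (y + 1), inB δ x
      = ∑ x ∈ Finset.Ico (y - k) y, inB δ x + inB δ y := by
    exact sum_Ico_top (by omega)
  -- middle comparison
  have hmid := C.sum_off (Finset.Ico (y - k) y) {y - 1}
    (by
      intro x hx
      simp only [Finset.mem_singleton] at hx
      rw [Finset.mem_Ico]
      omega)
    (by
      intro x hx hnx
      rw [Finset.mem_Ico] at hx
      simp only [Finset.mem_singleton] at hnx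
      apply inB_eq_of_iff
      apply C.E1 x
      · intro hc
        have : x = y - 1 := C.near_eq (hc.trans hym1.symm) (by omega) (by omega)
        omega
      · intro hc
        have : x = y := C.near_eq (hc.trans hcl.symm) (by omega) (by omega)
        omega)
  rw [Finset.sum_singleton] at hmid
  -- the pair terms
  have hy1notB : y - 1 ∉ BSet δ := by
    intro h
    have := (class_c_iff C.hδ C.hcore C.htop C.hr hym1).1 h
    omega
  have hFy1 : inB C.δ' (y - 1) = 1 := by
    have := C.E2 (y - 1) hym1
    rw [inB, if_pos]
    rw [this]
    right
    convert hyB using 1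
    ring
  have hiy1 : inB δ (y - 1) = 0 := by rw [inB, if_neg hy1notB]
  have hiy : inB δ y = 1 := by rw [inB, if_pos hyB]
  -- left end of new window
  have hdy : ((k:ℤ)+1) ∣ y - bd δ r := by
    have := zmod_int_iff.1 hcl
    have h2 : ((k:ℤ)+1) ∣ bd δ r - y := by exact_mod_cast this
    have h3 := h2.neg_right
    rw [neg_sub] at h3
    exact h3
  have hyclose : y - k - 1 < bd δ r ↔ y = bd δ r := by
    constructor
    · intro h
      rcases hdy with ⟨m, hm⟩
      have hm0 : 0 ≤ m := by nlinarith
      have hm1 : m = 0 := by nlinarith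
      rw [hm1] at hm
      omega
    · intro h
      omega
  have hFend : inB C.δ' (y - 1 - k) = (if y = bd δ r then 1 else 0) := by
    have he : y - 1 - k = y - k - 1 := by ring
    rw [he]
    have h3 := C.E3 (y - k - 1) hyk1
    have hmem : y - k - 1 ∈ BSet δ := by
      have := bset_closure C.hδ C.hcore hyB
      convert this using 1
      ring
    by_cases hc : y = bd δ r
    · rw [if_pos hc, inB, if_pos (h3.2 ⟨hmem, hyclose.2 hc⟩)]
    · rw [if_neg hc, inB, if_neg]
      intro hin
      exact hc (hyclose.1 (h3.1 hin).2)
  rw [hLHS, hRHS, hmid, hFy1, hiy1, hFend, hiy]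
  ring

end Ctx

namespace Ctx

variable {k : ℕ} {δ : ℕ → ℕ} {r : ℕ}

lemma WCOL_C0 (C : Ctx k δ r) {x : ℤ}
    (hcl : (x : ZMod (k+1)) = ((bd δ r : ℤ) : ZMod (k+1)))
    (hxB : x ∉ BSet δ) :
    ∑ z ∈ Finset.Ico x (x + ((k:ℤ)+1)), inB C.δ' z
      = ∑ z ∈ Finset.Ico x (x + ((k:ℤ)+1)), inB δ z := by
  have hk := C.hk
  have hxk : ((x + k : ℤ) : ZMod (k+1)) = ((bd δ r - 1 : ℤ) : ZMod (k+1)) :=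
    class_trans hcl (-1) (by ring)
  have hxk1 : ((x + k + 1 : ℤ) : ZMod (k+1)) = ((x : ℤ) : ZMod (k+1)) :=
    class_trans (rfl : ((x:ℤ) : ZMod (k+1)) = _) (-1) (by ring)
  have hsum := C.sum_off (Finset.Ico x (x + ((k:ℤ)+1))) {x, x + k}
    (by
      intro z hz
      simp only [Finset.mem_insert, Finset.mem_singleton] at hz
      rw [Finset.mem_Ico]
      rcases hz with rfl|rfl <;> omega)
    (by
      intro z hz hnz
      rw [Finset.mem_Ico] at hz
      simp only [Finset.mem_insert, Finset.mem_singleton] at hnz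
      push_neg at hnz
      apply inB_eq_of_iff
      apply C.E1 z
      · intro hc
        have : z = x + k := C.near_eq (hc.trans hxk.symm) (by omega) (by omega)
        omega
      · intro hc
        have : z = x := C.near_eq (hc.trans hcl.symm) (by omega) (by omega)
        omega)
  rw [hsum, Finset.sum_pair (show x ≠ x + k by omega)]
  have h1 : inB C.δ' x = inB δ x := by
    apply inB_eq_of_iff
    rw [C.E3 x hcl]
    constructor
    · rintro ⟨h, _⟩; exact h
    · intro h; exact absurd h hxB
  have h2 : inB C.δ' (x + k) = inB δ (x + k) := by
    apply inB_eq_of_iff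
    rw [C.E2 (x + k) hxk]
    constructor
    · rintro (h|h)
      · exact h
      · exfalso
        apply hxB
        apply down_closed C.hδ C.hcore h (by omega)
        exact hxk1.symm
    · intro h; exact Or.inl h
  omega

lemma WCOL_SH (C : Ctx k δ r) {x : ℤ}
    (hcl : (x : ZMod (k+1)) = ((bd δ r - 1 : ℤ) : ZMod (k+1)))
    (hxB : x ∉ BSet δ) (hB1 : x + 1 ∈ BSet δ) (hge : bd δ r ≤ x + 1) :
    ∑ z ∈ Finset.Ico (x+1) (x + 1 + ((k:ℤ)+1)), inB C.δ' z
      ≤ ∑ z ∈ Finset.Ico x (x + ((k:ℤ)+1)), inB δ z := by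
  have hk := C.hk
  have hc0 : ((x + 1 : ℤ) : ZMod (k+1)) = ((bd δ r : ℤ) : ZMod (k+1)) :=
    class_trans hcl 0 (by ring)
  have hLHS : ∑ z ∈ Finset.Ico (x+1) (x + 1 + ((k:ℤ)+1)), inB C.δ' z
      = ∑ z ∈ Finset.Ico (x+1) (x + k + 1), inB C.δ' z + inB C.δ' (x + k + 1) := by
    have h := sum_Ico_top (f := inB C.δ') (a := x + 1) (b := x + k + 1) (by omega)
    have e1 : x + k + 1 + 1 = x + 1 + ((k:ℤ)+1) := by ring
    rw [e1] at h
    exact h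
  have hRHS : ∑ z ∈ Finset.Ico x (x + ((k:ℤ)+1)), inB δ z
      = inB δ x + ∑ z ∈ Finset.Ico (x+1) (x + k + 1), inB δ z := by
    have h := sum_Ico_bot (f := inB δ) (a := x) (b := x + k) (by omega)
    have e1 : x + k + 1 = x + ((k:ℤ)+1) := by ring
    rw [e1] at h
    have e2 : x + 1 + ((k:ℤ)+1) - 1 = x + k + 1 := by ring
    convert h using 3 <;> ring
  have hmid := C.sum_off (Finset.Ico (x+1) (x + k + 1)) {x + 1}
    (by
      intro z hz
      simp only [Finset.mem_singleton] at hz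
      rw [Finset.mem_Ico]
      omega)
    (by
      intro z hz hnz
      rw [Finset.mem_Ico] at hz
      simp only [Finset.mem_singleton] at hnz
      apply inB_eq_of_iff
      apply C.E1 z
      · intro hc
        have : z = x := C.near_eq (hc.trans hcl.symm) (by omega) (by omega)
        omega
      · intro hc
        have : z = x + 1 := C.near_eq (hc.trans hc0.symm) (by omega) (by omega)
        omega)
  rw [Finset.sum_singleton] at hmid
  have hF1 : inB C.δ' (x+1) = 0 := by
    rw [inB, if_neg]
    rw [C.E3 (x+1) hc0]
    rintro ⟨_, h⟩
    omega
  have hi1 : inB δ (x+1) = 1 := by rw [inB, if_pos hB1]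
  have hix : inB δ x = 0 := by rw [inB, if_neg hxB]
  have hend : inB C.δ' (x + k + 1) ≤ 1 := by
    rw [inB]
    split <;> omega
  have hend0 : 0 ≤ inB C.δ' (x + k + 1) := by
    rw [inB]
    split <;> omega
  omega

end Ctx

namespace Ctx

variable {k : ℕ} {δ : ℕ → ℕ} {r : ℕ}

lemma corner_conj (hδ : IsPartitionFun δ) {t j : ℕ} (h1 : δ t = j + 1)
    (h2 : δ (t+1) < δ t) : conjFun δ j = t + 1 := by
  have hset : {s : ℕ | j < δ s} = Set.Iio (t + 1) := by
    ext s
    simp only [Set.mem_setOf_eq, Set.mem_Iio]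
    constructor
    · intro hs
      by_contra h
      push_neg at h
      have := p_anti hδ (show t + 1 ≤ s by omega)
      omega
    · intro hs
      have := p_anti hδ (show s ≤ t by omega)
      omega
  rw [conjFun, hset, ncard_Iio]

lemma shcol_iff (C : Ctx k δ r) (j : ℕ) :
    (∃ t, δ t = j + 1 ∧ ShD k δ r (bd δ t))
      ↔ (xg δ j + 1 ∈ BSet δ ∧ ShD k δ r (xg δ j + 1)) := by
  constructor
  · rintro ⟨t, h1, hsh⟩
    have h2 := C.sh_rem hsh
    have hconj := corner_conj C.hδ h1 h2
    have hxg : xg δ j + 1 = bd δ t := by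
      rw [xg, hconj]
      have : bd δ t = (δ t : ℤ) - t := rfl
      push_cast
      omega
    rw [hxg]
    exact ⟨bd_mem δ t, hsh⟩
  · rintro ⟨⟨t, ht⟩, hsh⟩
    rw [← ht] at hsh
    have h2 := C.sh_rem hsh
    have h0 := C.sh_pos hsh
    have hjt : j < δ t := (bd_gt_xg_iff C.hδ).1 (by omega)
    have htc : t < conjFun δ j := (lt_conj_iff C.hδ).2 hjt
    have htc2 : ¬ (t + 1 < conjFun δ j) := by
      intro h
      have hj1 : j < δ (t+1) := (lt_conj_iff C.hδ).1 h
      have hb1 : bd δ (t+1) < bd δ t := bd_strictAnti C.hδ (by omega)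
      have := (bd_gt_xg_iff C.hδ (a := t+1) (j := j)).2 hj1
      omega
    have hconj : conjFun δ j = t + 1 := by omega
    have hδt : δ t = j + 1 := by
      have hb : bd δ t = (δ t : ℤ) - t := rfl
      rw [xg, hconj] at ht
      push_cast at ht
      omega
    exact ⟨t, hδt, hsh⟩

lemma conj'_int (C : Ctx k δ r) (j : ℕ) :
    (conjFun C.δ' j : ℤ) = (conjFun δ j : ℤ)
      - (if (xg δ j + 1 ∈ BSet δ ∧ ShD k δ r (xg δ j + 1)) then 1 else 0) := by
  classical
  set D : Set ℕ := {t | δ t = j + 1 ∧ ShD k δ r (bd δ t)} with hD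
  have hsplit : {t : ℕ | j < δ t} = {t : ℕ | j < C.δ' t} ∪ D := by
    ext t
    simp only [Set.mem_setOf_eq, Set.mem_union, hD]
    have hde := C.delta'_eq t
    by_cases hsh : ShD k δ r (bd δ t)
    · have hpos := C.sh_pos hsh
      rw [if_pos hsh] at hde
      constructor
      · intro ht
        rcases Nat.lt_or_ge (j+1) (δ t) with h|h
        · left; omega
        · right; exact ⟨by omega, hsh⟩
      · rintro (h|⟨h, _⟩) <;> omega
    · rw [if_neg hsh] at hde
      constructor
      · intro ht; left; omega
      · rintro (h|⟨h, hc⟩)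
        · omega
        · exact absurd hc hsh
  have hdisj : Disjoint {t : ℕ | j < C.δ' t} D := by
    rw [Set.disjoint_left]
    intro t ht ⟨h1, h2⟩
    simp only [Set.mem_setOf_eq] at ht
    have hde := C.delta'_eq t
    rw [if_pos h2] at hde
    omega
  have hfinD : D.Finite := Set.Finite.subset (conj_finite C.hδ j)
    (fun t ht => by
      simp only [hD, Set.mem_setOf_eq] at ht ⊢
      obtain ⟨h1, _⟩ := ht
      omega)
  have hcount : conjFun δ j = conjFun C.δ' j + D.ncard := by
    rw [conjFun, conjFun, hsplit, Set.ncard_union_eq hdisj (conj_finite C.hδ' j) hfinD]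
  have hDcard : D.ncard = (if (xg δ j + 1 ∈ BSet δ ∧ ShD k δ r (xg δ j + 1)) then 1 else 0) := by
    by_cases hex : xg δ j + 1 ∈ BSet δ ∧ ShD k δ r (xg δ j + 1)
    · rw [if_pos hex]
      rcases (C.shcol_iff j).2 hex with ⟨t0, ht0⟩
      have hsingle : D = {t0} := by
        ext t
        simp only [hD, Set.mem_setOf_eq, Set.mem_singleton_iff]
        constructor
        · rintro ⟨h1, h2⟩
          by_contra hne
          rcases Nat.lt_or_ge t t0 with h|h
          · have := C.sh_rem h2
            have := p_anti C.hδ (show t + 1 ≤ t0 by omega)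
            omega
          · have := C.sh_rem ht0.2
            have := p_anti C.hδ (show t0 + 1 ≤ t by omega)
            omega
        · rintro rfl; exact ht0
      rw [hsingle, Set.ncard_singleton]
    · rw [if_neg hex]
      have : D = ∅ := by
        ext t
        simp only [hD, Set.mem_setOf_eq, Set.mem_empty_iff_false, iff_false]
        intro hc
        exact hex ((C.shcol_iff j).1 ⟨t, hc⟩)
      rw [this, Set.ncard_empty]
  rw [hcount, hDcard]
  split <;> push_cast <;> ring

lemma xg'_eq (C : Ctx k δ r) (j : ℕ) :
    xg C.δ' j = xg δ j
      + (if (xg δ j + 1 ∈ BSet δ ∧ ShD k δ r (xg δ j + 1)) then 1 else 0) := by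
  have h := C.conj'_int j
  have h1 : xg C.δ' j = (j:ℤ) + 1 - conjFun C.δ' j := rfl
  have h2 : xg δ j = (j:ℤ) + 1 - conjFun δ j := rfl
  by_cases hc : (xg δ j + 1 ∈ BSet δ ∧ ShD k δ r (xg δ j + 1))
  · rw [if_pos hc] at h ⊢
    omega
  · rw [if_neg hc] at h ⊢
    omega

end Ctx

/-- Let `μ` be a `k`-bounded partition and `δ = 𝔠(μ)`.  Let `r` be the highest row of
`δ` containing a removable corner and `i` its residue.  Then no removable corner of
residue `i` lies higher, and removing all removable corners of residue `i` from `δ`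
gives the `(k+1)`-core of `μ - e_r`; moreover `μ - e_r ⊆ μ` and
`(μ - e_r)^{ω_k} ⊆ μ^{ω_k}`. -/
theorem stmt18 (k : ℕ) (μ δ : ℕ → ℕ)
    (hμ : IsPartitionFun μ) (hμb : ∀ i, μ i ≤ k)
    (hδ : IsPartitionFun δ) (hδcore : IsCore (k + 1) δ) (hδc : ∀ j, μ j = rowKB k δ j)
    (r : ℕ)
    (hr : 0 < δ r ∧ δ (r + 1) < δ r)
    (hhigh : ∀ r', r < r' → ¬ (0 < δ r' ∧ δ (r' + 1) < δ r')) :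
    (∀ r', r < r' → ¬ (0 < δ r' ∧ δ (r' + 1) < δ r' ∧
        res k r' (δ r' - 1) = res k r (δ r - 1))) ∧
    (∀ j, rowKB k (removeAll k (res k r (δ r - 1)) δ) j
        = (if j = r then μ j - 1 else μ j)) ∧
    (∀ j, (if j = r then μ j - 1 else μ j) ≤ μ j) ∧
    (∀ c, colKB k (removeAll k (res k r (δ r - 1)) δ) c ≤ colKB k δ c) := by
  classical
  have htop : ∀ t, r < t → δ t = 0 := by
    rcases hδ.2 with ⟨N, hN⟩
    have key : ∀ d t, r < t → N ≤ t + d → δ t = 0 := by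
      intro d
      induction d with
      | zero => intro t _ hle; exact hN t (by omega)
      | succ n ih =>
        intro t ht hle
        by_cases hNt : N ≤ t
        · exact hN t hNt
        · have h2 := ih (t+1) (by omega) (by omega)
          have h3 := hhigh t ht
          omega
    intro t ht
    exact key N t ht (by omega)
  have hk1 : 1 ≤ k := by
    have hset : {i' : ℕ | r < i' ∧ δ r - 1 < δ i'} = ∅ := by
      ext t
      simp only [Set.mem_setOf_eq, Set.mem_empty_iff_false, iff_false]
      rintro ⟨h1, h2⟩
      have := htop t h1
      omega
    have hhook : hookLen δ r (δ r - 1) = 1 := by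
      rw [hookLen, hset, Set.ncard_empty]
      omega
    have := hδcore r (δ r - 1) (by omega)
    omega
  have C : Ctx k δ r := ⟨hδ, hδcore, htop, hr.1, hk1⟩
  have hCd : removeAll k (res k r (δ r - 1)) δ = C.δ' := rfl
  have hShr : ShD k δ r (bd δ r) := ⟨rfl, le_refl _⟩
  have hbdinj := (bd_strictAnti hδ).injective
  refine ⟨?_, ?_, ?_, ?_⟩
  · rintro r' hlt ⟨h1, h2, _⟩
    exact hhigh r' hlt ⟨h1, h2⟩
  · intro j
    rw [hCd]
    have hrow := rowKB_eq hδ k j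
    have hrow' := rowKB_eq C.hδ' k j
    have hμj := hδc j
    by_cases hsh : ShD k δ r (bd δ j)
    · have hbd : bd C.δ' j = bd δ j - 1 := by rw [C.bd' j, if_pos hsh]
      have hW := C.WROW_SH hsh.1 (bd_mem δ j) hsh.2
      rw [hbd] at hrow'
      have e1 : bd δ j - 1 + 1 = bd δ j := by ring
      rw [e1] at hrow'
      by_cases hjr : j = r
      · subst hjr
        rw [if_pos rfl]
        rw [if_pos rfl] at hW
        have hz : (rowKB k C.δ' j : ℤ) = (μ j : ℤ) - 1 := by
          rw [hμj]
          push_cast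
          linarith
        omega
      · rw [if_neg hjr]
        rw [if_neg (fun hc : bd δ j = bd δ r => hjr (hbdinj hc))] at hW
        have hz : (rowKB k C.δ' j : ℤ) = (μ j : ℤ) := by
          rw [hμj]
          push_cast
          linarith
        omega
    · have hbd : bd C.δ' j = bd δ j := by rw [C.bd' j, if_neg hsh]; ring
      rw [hbd] at hrow'
      have hjr : j ≠ r := fun hc => hsh (hc ▸ hShr)
      rw [if_neg hjr]
      by_cases hcl : ((bd δ j : ℤ) : ZMod (k+1)) = ((bd δ r - 1 : ℤ) : ZMod (k+1))
      · have hW := C.WROW_C hcl (bd_mem δ j)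
        have hz : (rowKB k C.δ' j : ℤ) = (μ j : ℤ) := by
          rw [hμj]
          push_cast
          linarith
        omega
      · have hW := C.WROW_NE hcl
        have hz : (rowKB k C.δ' j : ℤ) = (μ j : ℤ) := by
          rw [hμj]
          push_cast
          linarith
        omega
  · intro j
    split <;> omega
  · intro j
    rw [hCd]
    have hcol := colKB_eq hδ k j
    have hcol' := colKB_eq C.hδ' k j
    have hxg := C.xg'_eq j
    by_cases he : (xg δ j + 1 ∈ BSet δ ∧ ShD k δ r (xg δ j + 1))
    · rw [if_pos he] at hxg
      have hclx : ((xg δ j : ℤ) : ZMod (k+1)) = ((bd δ r - 1 : ℤ) : ZMod (k+1)) :=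
        Ctx.class_trans he.2.1 0 (by ring)
      have hW := C.WCOL_SH hclx (xg_notMem hδ j) he.1 he.2.2
      rw [hxg] at hcol'
      have hz : (colKB k C.δ' j : ℤ) ≤ (colKB k δ j : ℤ) := by linarith
      exact_mod_cast hz
    · rw [if_neg he, add_zero] at hxg
      rw [hxg] at hcol'
      by_cases hc0 : ((xg δ j : ℤ) : ZMod (k+1)) = ((bd δ r : ℤ) : ZMod (k+1))
      · have hW := C.WCOL_C0 hc0 (xg_notMem hδ j)
        have hz : (colKB k C.δ' j : ℤ) ≤ (colKB k δ j : ℤ) := by linarith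
        exact_mod_cast hz
      · have hvne : ((xg δ j + k : ℤ) : ZMod (k+1)) ≠ ((bd δ r - 1 : ℤ) : ZMod (k+1)) := by
          intro hc
          exact hc0 (Ctx.class_trans hc 1 (by ring))
        have hW := C.WROW_NE hvne
        have e1 : xg δ j + (k:ℤ) - k = xg δ j := by ring
        have e2 : xg δ j + (k:ℤ) + 1 = xg δ j + ((k:ℤ)+1) := by ring
        rw [e1, e2] at hW
        have hz : (colKB k C.δ' j : ℤ) ≤ (colKB k δ j : ℤ) := by linarith
        exact_mod_cast hz
end
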